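/- arXiv:0910.5732 — 4 statements merged into one kernel-verified Lean document; each statement's English description precedes it below -/
import Mathlib

section
/- Let (W,S) be a Coxeter system of finite rank, and let (S1,S0,S2) be a separation of S such that S0 is complete. If T ⊆ S1 separates S1, then T separates S. -/
universe u

variable {W : Type u} [Group W]

/-- `S` is a set of Coxeter generators of `W`: `W` has the Coxeter presentation
`⟨S ∣ (st)^{m(s,t)} = 1⟩` whose simple reflections are the elements of `S`. -/
def IsCoxeterGeneratingSet (W : Type u) [Group W] (S : Set W) : Prop :=
  ∃ (M : CoxeterMatrix S) (cs : CoxeterSystem M W), ∀ s : S, cs.simple s = (s : W)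

/-- The presentation diagram of a Coxeter system, induced on the vertex set `A ⊆ W`:
distinct `s, t ∈ A` are adjacent exactly when `s * t` has finite order
(recall `orderOf x = 0` exactly when `x` has infinite order). -/
def presGraph (W : Type u) [Group W] (A : Set W) : SimpleGraph W where
  Adj s t := s ≠ t ∧ s ∈ A ∧ t ∈ A ∧ orderOf (s * t) ≠ 0
  symm := by
    constructor
    rintro s t ⟨h1, h2, h3, h4⟩
    refine ⟨h1.symm, h3, h2, ?_⟩
    have : SemiconjBy s (t * s) (s * t) := by unfold SemiconjBy; group
    rwa [this.orderOf_eq s]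
  loopless := by constructor; rintro s ⟨h, -⟩; exact h rfl

/-- `T` separates `R`: two elements of `R − T` lie in different connected components of the
induced subgraph of the presentation diagram on `R − T`. -/
def Separates (W : Type u) [Group W] (R T : Set W) : Prop :=
  ∃ a ∈ R \ T, ∃ b ∈ R \ T, ¬ (presGraph W (R \ T)).Reachable a b

/-- A subset `C` is complete if every product of two of its elements has finite order. -/
def IsCompleteSet (W : Type u) [Group W] (C : Set W) : Prop :=
  ∀ s ∈ C, ∀ t ∈ C, orderOf (s * t) ≠ 0

/-- `R` is separated by a complete subset of `R`. -/
def SeparatedByComplete (W : Type u) [Group W] (R : Set W) : Prop :=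
  ∃ T ⊆ R, IsCompleteSet W T ∧ Separates W R T

/-- `(S1, S0, S2)` is a separation of `S`. -/
def IsSeparation (W : Type u) [Group W] (S S1 S0 S2 : Set W) : Prop :=
  S1 ∪ S2 = S ∧ S1 ∩ S2 = S0 ∧ (S1 \ S0).Nonempty ∧ (S2 \ S0).Nonempty ∧
    ∀ a ∈ S1 \ S0, ∀ b ∈ S2 \ S0, orderOf (a * b) = 0

/-- `S0` is an `(a,b)`-separator of `S`: `a` and `b` lie in different connected components
of the induced subgraph of the presentation diagram on `S − S0`. -/
def IsABSeparator (W : Type u) [Group W] (S S0 : Set W) (a b : W) : Prop :=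
  a ∈ S \ S0 ∧ b ∈ S \ S0 ∧ ¬ (presGraph W (S \ S0)).Reachable a b

/-- `S0` is a relative minimal separator of `S`: a minimal `(a,b)`-separator of `S`
for some `a, b`. -/
def RelMinSeparator (W : Type u) [Group W] (S S0 : Set W) : Prop :=
  ∃ a b, IsABSeparator W S S0 a b ∧ ∀ T ⊂ S0, ¬ IsABSeparator W S T a b

/-- The set `wTw⁻¹`. -/
def conjSet (w : W) (T : Set W) : Set W := (fun x => w * x * w⁻¹) '' T

/-- `S0` is a c-minimal separator of `S`: `S0` separates `S` and no conjugate of a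
proper subset of `S0` that lies in `S` separates `S`. -/
def CMinSeparator (W : Type u) [Group W] (S S0 : Set W) : Prop :=
  Separates W S S0 ∧
    ¬ ∃ (w : W) (T : Set W), T ⊆ S0 ∧ T ≠ S0 ∧ conjSet w T ⊆ S ∧ Separates W S (conjSet w T)

/-- The union of the bags over the component of the tree `T` minus the edge `{u,v}`
containing `u`. -/
def edgeSide {W : Type u} [Group W] {V : Type} (T : SimpleGraph V) (bag : V → Set W)
    (u v : V) : Set W :=
  ⋃ w ∈ {w | (T.deleteEdges {s(u, v)}).Reachable u w}, bag w

/-- A visual tree decomposition of the Coxeter system `(W, S)`: a finite nonempty tree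
with bags `R_v ⊆ S` covering `S` such that for each edge `{u,v}`, the unions `A`, `B` of
bags over the two components of the tree minus the edge satisfy `A ∩ B = R_u ∩ R_v` and
`m(a,b) = ∞` for `a ∈ A − R_u ∩ R_v`, `b ∈ B − R_u ∩ R_v`.  This exhibits `W` as an
iterated visual amalgamated product of the groups `⟨R_v⟩` over the groups `⟨R_u ∩ R_v⟩`. -/
structure VisualTreeDecomp (W : Type u) [Group W] (S : Set W) where
  V : Type
  fintypeV : Fintype V
  T : SimpleGraph V
  isTree : T.IsTree
  bag : V → Set W
  bag_subset : ∀ v, bag v ⊆ S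
  bags_cover : (⋃ v, bag v) = S
  inter_eq : ∀ u v, T.Adj u v →
    edgeSide T bag u v ∩ edgeSide T bag v u = bag u ∩ bag v
  infinite_order : ∀ u v, T.Adj u v →
    ∀ a ∈ edgeSide T bag u v \ (bag u ∩ bag v),
      ∀ b ∈ edgeSide T bag v u \ (bag u ∩ bag v), orderOf (a * b) = 0

/-- A visual tree decomposition is reduced if each edge set is a proper subset of
the two incident bags. -/
def VisualTreeDecomp.Reduced {W : Type u} [Group W] {S : Set W}
    (D : VisualTreeDecomp W S) : Prop :=
  ∀ u v, D.T.Adj u v → D.bag u ∩ D.bag v ⊂ D.bag u ∧ D.bag u ∩ D.bag v ⊂ D.bag v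

/-- A group `G` has property FA if every action of `G` by graph automorphisms and
without inversions on a (nonempty) tree has a global fixed vertex. -/
def HasPropertyFA (G : Type u) [Group G] : Prop :=
  ∀ (V : Type u) (T : SimpleGraph V), T.IsTree →
    ∀ [MulAction G V],
      (∀ (g : G) (a b : V), T.Adj a b → T.Adj (g • a) (g • b)) →
      (¬ ∃ (g : G) (a b : V), T.Adj a b ∧ g • a = b ∧ g • b = a) →
      ∃ x : V, ∀ g : G, g • x = x

/-- The class 𝓕𝓐 of subgroups of `W`: those contained in a subgroup with property FA. -/
def MemFA {W : Type u} [Group W] (H : Subgroup W) : Prop :=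
  ∃ K : Subgroup W, H ≤ K ∧ HasPropertyFA K

/-- A chord of a closed walk: an edge of the graph between two vertices of the walk
that is not an edge of the walk. -/
def SimpleGraph.Walk.HasChord {V : Type*} {G : SimpleGraph V} {v : V} (c : G.Walk v v) : Prop :=
  ∃ a b, a ∈ c.support ∧ b ∈ c.support ∧ G.Adj a b ∧ s(a, b) ∉ c.edges

/-- A graph is chordal if every cycle of length at least four has a chord. -/
def SimpleGraph.IsChordalGraph {V : Type*} (G : SimpleGraph V) : Prop :=
  ∀ (v : V) (c : G.Walk v v), c.IsCycle → 4 ≤ c.length → c.HasChord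

/-- The set of all conjugates of elements of `S`. -/
def ConjugatesOf (W : Type u) [Group W] (S : Set W) : Set W :=
  {x | ∃ s ∈ S, ∃ w : W, x = w * s * w⁻¹}

/-- `S` is sharp-angled with respect to `S'`: every pair `s, t ∈ S` with `2 < m(s,t) < ∞`
is conjugate by a single element into `S'`. -/
def SharpAngled (W : Type u) [Group W] (S S' : Set W) : Prop :=
  ∀ s ∈ S, ∀ t ∈ S, 2 < orderOf (s * t) →
    ∃ w : W, w * s * w⁻¹ ∈ S' ∧ w * t * w⁻¹ ∈ S'

/-- `S''` is obtained from `S` by an elementary twist `(S1, ℓ, S2)`. -/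
def ElemTwist (W : Type u) [Group W] (S S'' : Set W) : Prop :=
  ∃ (S1 S2 : Set W) (ℓ : W), S1 ∪ S2 = S ∧
    (∀ a ∈ S1 \ (S1 ∩ S2), ∀ b ∈ S2 \ (S1 ∩ S2), orderOf (a * b) = 0) ∧
    ℓ ∈ Subgroup.closure (S1 ∩ S2) ∧ conjSet ℓ (S1 ∩ S2) = S1 ∩ S2 ∧
    S'' = S1 ∪ conjSet ℓ S2

/-- Two sets of Coxeter generators are twist equivalent if one is obtained from the
other by a finite sequence of elementary twists. -/
def TwistEquiv (W : Type u) [Group W] (S S' : Set W) : Prop :=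
  Relation.ReflTransGen (ElemTwist W) S S'

/-- `(W, S)` satisfies the twist conjecture: every set `S'` of Coxeter generators of `W`
consisting of conjugates of elements of `S`, with `S` sharp-angled with respect to `S'`,
is twist equivalent to `S`. -/
def SatisfiesTwistConjecture (W : Type u) [Group W] (S : Set W) : Prop :=
  ∀ S' : Set W, IsCoxeterGeneratingSet W S' → S' ⊆ ConjugatesOf W S →
    SharpAngled W S S' → TwistEquiv W S S'

private lemma orderOf_mul_comm' {W : Type u} [Group W] (s t : W) :
    orderOf (s * t) = orderOf (t * s) := by
  have h : SemiconjBy s (t * s) (s * t) := by unfold SemiconjBy; group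
  exact (h.orderOf_eq s).symm

/-- Lemma 2.1. Let `(W,S)` be a Coxeter system of finite rank, and let
`(S1,S0,S2)` be a separation of `S` such that `S0` is complete.  If `T ⊆ S1` separates
`S1`, then `T` separates `S`. -/
theorem separates_of_separates_side {W : Type u} [Group W] (S S1 S0 S2 T : Set W)
    (hcox : IsCoxeterGeneratingSet W S) (hfin : S.Finite)
    (hsep : IsSeparation W S S1 S0 S2) (hS0 : IsCompleteSet W S0)
    (hT : T ⊆ S1) (hTsep : Separates W S1 T) :
    Separates W S T := by
  obtain ⟨hUnion, hInter, hne1, hne2, hinf⟩ := hsep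
  have hS01 : S0 ⊆ S1 := by rw [← hInter]; exact Set.inter_subset_left
  have hS1S : S1 ⊆ S := by rw [← hUnion]; exact Set.subset_union_left
  set G := presGraph W (S \ T) with hG
  set G1 := presGraph W (S1 \ T) with hG1
  -- inner lemma: a walk in G from a vertex in S2\S0 to a vertex in S1 passes through S0
  have inner : ∀ {x b : W} (q : G.Walk x b), x ∈ S2 → x ∉ S0 → b ∈ S1 →
      ∃ y, y ∈ S0 ∧ y ∈ S \ T ∧ ∃ r : G.Walk y b, r.length ≤ q.length := by
    intro x b q
    induction q with
    | nil =>
      intro hx2 hx0 hb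
      exact absurd (hInter ▸ ⟨hb, hx2⟩) hx0
    | @cons x z b hadj q ih =>
      intro hx2 hx0 hb
      obtain ⟨hxz, hxm, hzm, hord⟩ := hadj
      by_cases hz1 : z ∈ S1
      · have hz0 : z ∈ S0 := by
          by_contra hz0
          have := hinf z ⟨hz1, hz0⟩ x ⟨hx2, hx0⟩
          rw [orderOf_mul_comm'] at hord
          exact hord this
        exact ⟨z, hz0, hzm, q, Nat.le_succ _⟩
      · have hz2 : z ∈ S2 := by
          have : z ∈ S1 ∪ S2 := hUnion ▸ hzm.1
          exact this.resolve_left hz1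
        obtain ⟨y, hy0, hym, r, hr⟩ := ih hz2 (fun h => hz1 (hS01 h)) hb
        exact ⟨y, hy0, hym, r, le_trans hr (Nat.le_succ _)⟩
  -- outer lemma: a walk in G between vertices of S1 yields reachability in G1
  have outer : ∀ n : ℕ, ∀ a b : W, a ∈ S1 → a ∈ S \ T → b ∈ S1 →
      ∀ p : G.Walk a b, p.length ≤ n → G1.Reachable a b := by
    intro n
    induction n with
    | zero =>
      intro a b ha1 ham hb1 p hp
      have : p.length = 0 := Nat.le_zero.mp hp
      have := SimpleGraph.Walk.eq_of_length_eq_zero this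
      exact this ▸ SimpleGraph.Reachable.refl a
    | succ m ih =>
      intro a b ha1 ham hb1 p hp
      cases p with
      | nil => exact SimpleGraph.Reachable.refl a
      | @cons a x b hadj q =>
        obtain ⟨hax, ham', hxm, hord⟩ := hadj
        have hq : q.length ≤ m := by
          exact Nat.le_of_succ_le_succ hp
        by_cases hx1 : x ∈ S1
        · have hadj1 : G1.Adj a x :=
            ⟨hax, ⟨ha1, ham.2⟩, ⟨hx1, hxm.2⟩, hord⟩
          exact hadj1.reachable.trans (ih x b hx1 hxm hb1 q hq)
        · have hx2 : x ∈ S2 := by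
            have : x ∈ S1 ∪ S2 := hUnion ▸ hxm.1
            exact this.resolve_left hx1
          have hx0 : x ∉ S0 := fun h => hx1 (hS01 h)
          have ha0 : a ∈ S0 := by
            by_contra ha0
            exact hord (hinf a ⟨ha1, ha0⟩ x ⟨hx2, hx0⟩)
          obtain ⟨y, hy0, hym, r, hr⟩ := inner q hx2 hx0 hb1
          have hyb : G1.Reachable y b :=
            ih y b (hS01 hy0) hym hb1 r (le_trans hr hq)
          by_cases hay : a = y
          · exact hay ▸ hyb
          · have hadj1 : G1.Adj a y :=
              ⟨hay, ⟨ha1, ham.2⟩, ⟨hS01 hy0, hym.2⟩, hS0 a ha0 y hy0⟩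
            exact hadj1.reachable.trans hyb
  obtain ⟨a, ha, b, hb, hnr⟩ := hTsep
  refine ⟨a, ⟨hS1S ha.1, ha.2⟩, b, ⟨hS1S hb.1, hb.2⟩, ?_⟩
  intro hreach
  obtain ⟨p⟩ := hreach
  exact hnr (outer p.length a b ha.1 ⟨hS1S ha.1, ha.2⟩ hb.1 p le_rfl)
end

section
/- Let (W,S) be a Coxeter system of finite rank, and fix a reduced visual tree decomposition of (W,S) such that every bag R_v is not separated by any complete subset of R_v and every edge set R_u ∩ R_v is complete. Then a subset R ⊆ S is a bag of this decomposition if and only if R is a maximal subset of S that is not separated by a complete subset of R (i.e., no complete subset of R separates R, and R is maximal under inclusion among subsets of S with this property). -/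
universe u

variable {W : Type u} [Group W]

section Aux

variable {W : Type u} [Group W]

lemma walk_delete_or {V : Type} (T : SimpleGraph V) {u v : V} {y w : V} (p : T.Walk y w) :
    ((T.deleteEdges {s(u,v)}).Reachable u y ∨ (T.deleteEdges {s(u,v)}).Reachable v y) →
    ((T.deleteEdges {s(u,v)}).Reachable u w ∨ (T.deleteEdges {s(u,v)}).Reachable v w) := by
  induction p with
  | nil => exact id
  | @cons y x w h q ih =>
    intro hy
    apply ih
    by_cases he : s(y, x) = s(u, v)
    · rcases Sym2.eq_iff.mp he with ⟨rfl, rfl⟩ | ⟨rfl, rfl⟩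
      · exact Or.inr (SimpleGraph.Reachable.refl _)
      · exact Or.inl (SimpleGraph.Reachable.refl _)
    · have hadj : (T.deleteEdges {s(u,v)}).Adj y x := by
        rw [SimpleGraph.deleteEdges_adj]
        exact ⟨h, by simpa using he⟩
      rcases hy with h1 | h1
      · exact Or.inl (h1.trans hadj.reachable)
      · exact Or.inr (h1.trans hadj.reachable)

lemma bag_subset_edgeSide {S : Set W} (D : VisualTreeDecomp W S)
    {u v w : D.V} (h : (D.T.deleteEdges {s(u,v)}).Reachable u w) :
    D.bag w ⊆ edgeSide D.T D.bag u v := by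
  intro x hx
  exact Set.mem_biUnion h hx

lemma self_subset_edgeSide {S : Set W} (D : VisualTreeDecomp W S) (u v : D.V) :
    D.bag u ⊆ edgeSide D.T D.bag u v :=
  bag_subset_edgeSide D (SimpleGraph.Reachable.refl u)

lemma edgeSide_subset {S : Set W} (D : VisualTreeDecomp W S) (u v : D.V) :
    edgeSide D.T D.bag u v ⊆ S := by
  refine Set.iUnion₂_subset fun w _ => ?_
  exact D.bag_subset w

lemma edgeSide_union {S : Set W} (D : VisualTreeDecomp W S) {u v : D.V} (h : D.T.Adj u v) :
    edgeSide D.T D.bag u v ∪ edgeSide D.T D.bag v u = S := by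
  apply Set.Subset.antisymm
  · exact Set.union_subset (edgeSide_subset D u v) (edgeSide_subset D v u)
  · intro x hx
    rw [← D.bags_cover] at hx
    obtain ⟨w, hw⟩ := Set.mem_iUnion.mp hx
    have := walk_delete_or (u := u) (v := v) D.T
      (D.isTree.isConnected u w).some (Or.inl (SimpleGraph.Reachable.refl u))
    rcases this with h1 | h1
    · exact Or.inl (bag_subset_edgeSide D h1 hw)
    · have h1' : (D.T.deleteEdges {s(v,u)}).Reachable v w := by
        rwa [Sym2.eq_swap] at h1
      exact Or.inr (bag_subset_edgeSide D h1' hw)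

/-- Dichotomy: a set not separated by a complete subset lies on one side of each edge. -/
lemma dichotomy {S : Set W} (D : VisualTreeDecomp W S)
    (hedge : ∀ u v, D.T.Adj u v → IsCompleteSet W (D.bag u ∩ D.bag v))
    {R : Set W} (hRS : R ⊆ S) (hR : ¬ SeparatedByComplete W R)
    {u v : D.V} (huv : D.T.Adj u v) :
    R ⊆ edgeSide D.T D.bag u v ∨ R ⊆ edgeSide D.T D.bag v u := by
  by_contra hcon
  push_neg at hcon
  obtain ⟨hc1, hc2⟩ := hcon
  obtain ⟨a, haR, haA⟩ := Set.not_subset.mp hc1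
  obtain ⟨b, hbR, hbB⟩ := Set.not_subset.mp hc2
  set A := edgeSide D.T D.bag u v with hA
  set B := edgeSide D.T D.bag v u with hB
  set C := D.bag u ∩ D.bag v with hC
  have hABC : A ∩ B = C := D.inter_eq u v huv
  have hUnion : A ∪ B = S := edgeSide_union D huv
  have hCA : C ⊆ A := by rw [← hABC]; exact Set.inter_subset_left
  have hCB : C ⊆ B := by rw [← hABC]; exact Set.inter_subset_right
  have haB : a ∈ B := by
    have : a ∈ A ∪ B := hUnion ▸ hRS haR
    exact this.resolve_left haA
  have hbA : b ∈ A := by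
    have : b ∈ A ∪ B := hUnion ▸ hRS hbR
    exact this.resolve_right hbB
  have haC : a ∉ C := fun h => haA (hCA h)
  have hbC : b ∉ C := fun h => hbB (hCB h)
  apply hR
  refine ⟨C ∩ R, Set.inter_subset_right, ?_, ?_⟩
  · intro s hs t ht
    exact hedge u v huv s hs.1 t ht.1
  · have hset : R \ (C ∩ R) = R \ C := by
      ext x; constructor
      · rintro ⟨h1, h2⟩; exact ⟨h1, fun h => h2 ⟨h, h1⟩⟩
      · rintro ⟨h1, h2⟩; exact ⟨h1, fun h => h2 h.1⟩
    refine ⟨b, ?_, a, ?_, ?_⟩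
    · rw [hset]; exact ⟨hbR, hbC⟩
    · rw [hset]; exact ⟨haR, haC⟩
    · rw [hset]
      rintro ⟨p⟩
      -- walk from b to a stays in A \ C
      have key : ∀ {x y : W} (q : (presGraph W (R \ C)).Walk x y),
          x ∈ A \ C → y ∈ A \ C := by
        intro x y q
        induction q with
        | nil => exact id
        | @cons x z y h q ih =>
          intro hx
          apply ih
          obtain ⟨hne, hxm, hzm, hord⟩ := h
          have hzS : z ∈ A ∪ B := hUnion ▸ hRS hzm.1
          rcases hzS with hz | hz
          · exact ⟨hz, hzm.2⟩
          · exfalso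
            exact hord (D.infinite_order u v huv x hx z ⟨hz, hzm.2⟩)
      have := key p ⟨hbA, hbC⟩
      exact haA this.1

/-- Every finite tree orientation has a sink. -/
lemma exists_sink {S : Set W} (D : VisualTreeDecomp W S) {R : Set W}
    (hdich : ∀ u v : D.V, D.T.Adj u v →
      R ⊆ edgeSide D.T D.bag u v ∨ R ⊆ edgeSide D.T D.bag v u) :
    ∃ v : D.V, ∀ w : D.V, D.T.Adj v w → R ⊆ edgeSide D.T D.bag v w := by
  haveI := D.fintypeV
  haveI : DecidableEq D.V := Classical.decEq _
  haveI : DecidableRel D.T.Adj := Classical.decRel _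
  by_contra hcon
  push_neg at hcon
  choose g hg1 hg2 using hcon
  -- map each vertex to an incident edge pointing away; injective
  have hmem : ∀ v : D.V, s(v, g v) ∈ D.T.edgeFinset := by
    intro v
    rw [SimpleGraph.mem_edgeFinset]
    exact (hg1 v)
  set f : D.V → D.T.edgeFinset := fun v => ⟨s(v, g v), hmem v⟩ with hf
  have hinj : Function.Injective f := by
    intro v v' h
    simp only [hf, Subtype.mk_eq_mk] at h
    rcases Sym2.eq_iff.mp h with ⟨h1, h2⟩ | ⟨h1, h2⟩
    · exact h1
    · exfalso
      rcases hdich v (g v) (hg1 v) with hd | hd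
      · exact hg2 v hd
      · rw [h2, h1] at hd
        exact hg2 v' hd
  have hcard := Fintype.card_le_of_injective f hinj
  have hcard2 : Fintype.card D.T.edgeFinset = D.T.edgeFinset.card :=
    Fintype.card_coe _
  have htree := D.isTree.card_edgeFinset
  omega

lemma first_edge {S : Set W} (D : VisualTreeDecomp W S) {v u : D.V} (hne : v ≠ u) :
    ∃ w0 : D.V, D.T.Adj v w0 ∧ (D.T.deleteEdges {s(w0, v)}).Reachable w0 u := by
  haveI : DecidableEq D.V := Classical.decEq _
  obtain ⟨p0⟩ := D.isTree.isConnected v u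
  set p := p0.toPath with hp
  have hpath : (p : D.T.Walk v u).IsPath := p.2
  cases hpw : (p : D.T.Walk v u) with
  | nil => exact absurd rfl hne
  | cons h q =>
    rename_i w0
    refine ⟨w0, h, ?_⟩
    have hnodup : ((p : D.T.Walk v u)).support.Nodup := hpath.support_nodup
    rw [hpw, SimpleGraph.Walk.support_cons] at hnodup
    have hvq : v ∉ q.support := by
      simpa using (List.nodup_cons.mp hnodup).1
    have hedges : ∀ e ∈ q.edges, e ∉ ({s(w0, v)} : Set (Sym2 D.V)) := by
      intro e he hmem
      rw [Set.mem_singleton_iff] at hmem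
      subst hmem
      exact hvq (q.snd_mem_support_of_mem_edges he)
    exact ⟨q.toDeleteEdges _ hedges⟩

/-- Key lemma: any subset of `S` not separated by a complete subset is inside a bag. -/
lemma subset_bag {S : Set W} (D : VisualTreeDecomp W S)
    (hedge : ∀ u v, D.T.Adj u v → IsCompleteSet W (D.bag u ∩ D.bag v))
    {R : Set W} (hRS : R ⊆ S) (hR : ¬ SeparatedByComplete W R) :
    ∃ v : D.V, R ⊆ D.bag v := by
  obtain ⟨v, hv⟩ := exists_sink D (fun u v h => dichotomy D hedge hRS hR h)
  refine ⟨v, fun x hx => ?_⟩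
  have hxS : x ∈ S := hRS hx
  rw [← D.bags_cover] at hxS
  obtain ⟨u, hu⟩ := Set.mem_iUnion.mp hxS
  by_cases hvu : v = u
  · exact hvu ▸ hu
  · obtain ⟨w0, hadj, hreach⟩ := first_edge D hvu
    have h1 : x ∈ edgeSide D.T D.bag v w0 := hv w0 hadj hx
    have h2 : x ∈ edgeSide D.T D.bag w0 v := bag_subset_edgeSide D hreach hu
    have := D.inter_eq v w0 hadj
    have : x ∈ D.bag v ∩ D.bag w0 := this ▸ ⟨h1, h2⟩
    exact this.1

/-- Bags are pairwise incomparable in a reduced decomposition. -/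
lemma bag_subset_bag {S : Set W} (D : VisualTreeDecomp W S) (hred : D.Reduced)
    {v u : D.V} (h : D.bag v ⊆ D.bag u) : v = u := by
  by_contra hne
  obtain ⟨w0, hadj, hreach⟩ := first_edge D hne
  have h1 : D.bag v ⊆ edgeSide D.T D.bag v w0 := self_subset_edgeSide D v w0
  have h2 : D.bag v ⊆ edgeSide D.T D.bag w0 v :=
    h.trans (bag_subset_edgeSide D hreach)
  have h3 : D.bag v ⊆ D.bag v ∩ D.bag w0 := by
    rw [← D.inter_eq v w0 hadj]
    exact Set.subset_inter h1 h2
  exact (hred v w0 hadj).1.not_subset h3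

end Aux

/-- part of Theorem 2.5. Fix a reduced visual tree decomposition of a
finite rank Coxeter system `(W,S)` with no bag separated by a complete subset and all
edge sets complete.  Then `R ⊆ S` is a bag if and only if `R` is a maximal subset of `S`
not separated by a complete subset. -/
theorem bag_iff_maximal_unseparated {W : Type u} [Group W] (S : Set W)
    (hcox : IsCoxeterGeneratingSet W S) (hfin : S.Finite)
    (D : VisualTreeDecomp W S) (hred : D.Reduced)
    (hbag : ∀ v, ¬ SeparatedByComplete W (D.bag v))
    (hedge : ∀ u v, D.T.Adj u v → IsCompleteSet W (D.bag u ∩ D.bag v))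
    (R : Set W) :
    (∃ v, D.bag v = R) ↔
      (R ⊆ S ∧ ¬ SeparatedByComplete W R ∧
        ∀ R', R ⊆ R' → R' ⊆ S → ¬ SeparatedByComplete W R' → R' = R) := by
  constructor
  · rintro ⟨v, rfl⟩
    refine ⟨D.bag_subset v, hbag v, fun R' hsub hsubS hR' => ?_⟩
    obtain ⟨u, hu⟩ := subset_bag D hedge hsubS hR'
    have : v = u := bag_subset_bag D hred (hsub.trans hu)
    subst this
    exact Set.Subset.antisymm hu hsub
  · rintro ⟨hRS, hR, hmax⟩
    obtain ⟨v, hv⟩ := subset_bag D hedge hRS hR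
    exact ⟨v, hmax (D.bag v) hv (D.bag_subset v) (hbag v)⟩
end

section
/- Let (W,S) be a Coxeter system of finite rank, and fix a reduced visual tree decomposition of (W,S) such that every bag R_v is not separated by any complete subset of R_v and every edge set R_u ∩ R_v is complete. Then a subset T ⊆ S equals R_u ∩ R_v for some edge {u,v} of the decomposition if and only if T is a complete relative minimal separator of S. -/
universe u

variable {W : Type u} [Group W]

section Aux

private lemma presGraph_mono {X Y : Set W} (h : X ⊆ Y) : presGraph W X ≤ presGraph W Y := by
  rintro s t ⟨h1, h2, h3, h4⟩
  exact ⟨h1, h h2, h h3, h4⟩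

/-- Key separation lemma: if `A ∪ B = S` and all pairs across `A ∩ B` have infinite order,
then there is no path in `presGraph W (S \ (A ∩ B))` from `A \ B` to `B \ A`. -/
private lemma sep_lemma {S A B : Set W} (hU : A ∪ B = S)
    (hinf : ∀ a ∈ A \ (A ∩ B), ∀ b ∈ B \ (A ∩ B), orderOf (a * b) = 0) :
    ∀ a ∈ A \ B, ∀ b ∈ B \ A, ¬ (presGraph W (S \ (A ∩ B))).Reachable a b := by
  have key : ∀ x y : W, (presGraph W (S \ (A ∩ B))).Walk x y → x ∈ A \ B → y ∈ A \ B := by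
    intro x y p
    induction p with
    | nil => exact id
    | @cons x z y h q ih =>
      intro hx
      apply ih
      obtain ⟨hne, hxS, hzS, hord⟩ := h
      have hz : z ∈ A ∪ B := by rw [hU]; exact hzS.1
      by_cases hzA : z ∈ A
      · exact ⟨hzA, fun hzB => hzS.2 ⟨hzA, hzB⟩⟩
      · rcases hz with hz | hz
        · exact absurd hz hzA
        · exact absurd (hinf x ⟨hx.1, fun hE => hx.2 hE.2⟩ z ⟨hz, fun hE => hzA hE.1⟩) hord
  intro a ha b hb hr
  obtain ⟨p⟩ := hr
  exact (key a b p ha).2 hb.1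

/-- In a connected graph, after deleting the edge `{u,v}`, every vertex is reachable
from `u` or from `v`. -/
private lemma reach_or {V : Type} {G : SimpleGraph V} (hc : G.Connected) (u v w : V) :
    (G.deleteEdges {s(u, v)}).Reachable u w ∨ (G.deleteEdges {s(u, v)}).Reachable v w := by
  have aux : ∀ x y : V, G.Walk x y →
      ((G.deleteEdges {s(u, v)}).Reachable u x ∨ (G.deleteEdges {s(u, v)}).Reachable v x) →
      ((G.deleteEdges {s(u, v)}).Reachable u y ∨ (G.deleteEdges {s(u, v)}).Reachable v y) := by
    intro x y p
    induction p with
    | nil => exact id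
    | @cons x z y h q ih =>
      intro hx
      apply ih
      by_cases he : s(x, z) = s(u, v)
      · rw [Sym2.eq_iff] at he
        rcases he with ⟨rfl, rfl⟩ | ⟨rfl, rfl⟩
        · exact Or.inr (SimpleGraph.Reachable.refl _)
        · exact Or.inl (SimpleGraph.Reachable.refl _)
      · have hadj : (G.deleteEdges {s(u, v)}).Adj x z := by
          rw [SimpleGraph.deleteEdges_adj]
          exact ⟨h, by simpa using he⟩
        rcases hx with hx | hx
        · exact Or.inl (hx.trans hadj.reachable)
        · exact Or.inr (hx.trans hadj.reachable)
  obtain ⟨p⟩ := hc.preconnected u w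
  exact aux u w p (Or.inl (SimpleGraph.Reachable.refl _))

/-- Bags of a decomposition satisfying `hbag` stay connected after removing a complete set. -/
private lemma bag_conn {R T : Set W} (h : ¬ SeparatedByComplete W R) (hTc : IsCompleteSet W T) :
    ∀ x ∈ R \ T, ∀ y ∈ R \ T, (presGraph W (R \ T)).Reachable x y := by
  intro x hx y hy
  by_contra hnr
  apply h
  refine ⟨T ∩ R, Set.inter_subset_right, fun s hs t ht => hTc s hs.1 t ht.1, ?_⟩
  have hset : R \ (T ∩ R) = R \ T := by
    ext z; constructor
    · rintro ⟨hz1, hz2⟩; exact ⟨hz1, fun hz => hz2 ⟨hz, hz1⟩⟩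
    · rintro ⟨hz1, hz2⟩; exact ⟨hz1, fun hz => hz2 hz.1⟩
  unfold Separates
  rw [hset]
  exact ⟨x, hx, y, hy, hnr⟩

private lemma mem_edgeSide {V : Type} {T : SimpleGraph V} {bag : V → Set W} {u v w : V}
    (hw : (T.deleteEdges {s(u, v)}).Reachable u w) {x : W} (hx : x ∈ bag w) :
    x ∈ edgeSide T bag u v :=
  Set.mem_biUnion hw hx

private lemma bag_subset_edgeSide_s7 {V : Type} {T : SimpleGraph V} {bag : V → Set W} (u v : V) :
    bag u ⊆ edgeSide T bag u v :=
  fun _ hx => mem_edgeSide (SimpleGraph.Reachable.refl _) hx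

private lemma sides_cover {S : Set W} (D : VisualTreeDecomp W S) (u v : D.V) :
    edgeSide D.T D.bag u v ∪ edgeSide D.T D.bag v u = S := by
  apply Set.Subset.antisymm
  · rintro x (hx | hx) <;>
    · obtain ⟨Bw, ⟨w, rfl⟩, hBw⟩ := hx
      obtain ⟨Bw', ⟨hw, rfl⟩, hx'⟩ := hBw
      exact D.bag_subset w hx'
  · intro x hx
    rw [← D.bags_cover] at hx
    obtain ⟨Bw, ⟨w, rfl⟩, hxw⟩ := hx
    rcases reach_or D.isTree.isConnected u v w with h | h
    · exact Or.inl (mem_edgeSide h hxw)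
    · refine Or.inr (mem_edgeSide ?_ hxw)
      rwa [show ({s(v, u)} : Set (Sym2 D.V)) = {s(u, v)} by rw [Sym2.eq_swap]]

/-- No path in `presGraph W (S \ (R_u ∩ R_v))` crosses the edge `{u,v}` of the decomposition. -/
private lemma edge_separator {S : Set W} (D : VisualTreeDecomp W S) {u v : D.V}
    (huv : D.T.Adj u v) {a b : W}
    (ha : a ∈ edgeSide D.T D.bag u v) (ha' : a ∉ edgeSide D.T D.bag v u)
    (hb : b ∈ edgeSide D.T D.bag v u) (hb' : b ∉ edgeSide D.T D.bag u v) :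
    ¬ (presGraph W (S \ (D.bag u ∩ D.bag v))).Reachable a b := by
  have hU := sides_cover D u v
  have hE := D.inter_eq u v huv
  have hinf := D.infinite_order u v huv
  rw [← hE] at hinf ⊢
  exact sep_lemma hU hinf a ⟨ha, ha'⟩ b ⟨hb, hb'⟩

/-- Walking along a tree path from a bag meeting the component of `a` towards a bag
containing `b`, we find an edge whose edge set is contained in `T` and is an
`(a,b)`-separator. -/
private lemma backward_aux {S : Set W} (D : VisualTreeDecomp W S)
    (hbag : ∀ v, ¬ SeparatedByComplete W (D.bag v))
    {T : Set W} (hTc : IsCompleteSet W T)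
    {a b : W} (hab : IsABSeparator W S T a b) :
    ∀ (w v0 : D.V) (p : D.T.Walk w v0), p.IsPath → b ∈ D.bag v0 →
      (∃ x ∈ D.bag w \ T, (presGraph W (S \ T)).Reachable a x) →
      ∃ u v, D.T.Adj u v ∧ D.bag u ∩ D.bag v ⊆ T ∧
        IsABSeparator W S (D.bag u ∩ D.bag v) a b := by
  intro w v0 p
  induction p with
  | @nil w =>
    rintro - hb0 ⟨x, hx, hax⟩
    exfalso
    have hbb : b ∈ D.bag w \ T := ⟨hb0, hab.2.1.2⟩
    have hc := bag_conn (hbag w) hTc x hx b hbb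
    exact hab.2.2 (hax.trans
      (hc.mono (presGraph_mono (Set.diff_subset_diff_left (D.bag_subset w)))))
  | @cons w z v0 h q ih =>
    rintro hp hb0 ⟨x, hx, hax⟩
    have hq : q.IsPath := hp.of_cons
    have hwsup : w ∉ q.support := ((SimpleGraph.Walk.cons_isPath_iff h q).1 hp).2
    by_cases hzcase : ∃ y ∈ D.bag z \ T, (presGraph W (S \ T)).Reachable a y
    · exact ih hq hb0 hzcase
    · have hEsub : D.bag w ∩ D.bag z ⊆ T := by
        intro y hy
        by_contra hyT
        apply hzcase
        refine ⟨y, ⟨hy.2, hyT⟩, ?_⟩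
        have hc := bag_conn (hbag w) hTc x hx y ⟨hy.1, hyT⟩
        exact hax.trans
          (hc.mono (presGraph_mono (Set.diff_subset_diff_left (D.bag_subset w))))
      have hIn := D.inter_eq w z h
      have hST : S \ T ⊆ S \ (D.bag w ∩ D.bag z) := Set.diff_subset_diff_right hEsub
      have haS : a ∈ S := hab.1.1
      have haT : a ∉ T := hab.1.2
      have hbS : b ∈ S := hab.2.1.1
      have hbT : b ∉ T := hab.2.1.2
      have hreachz : (D.T.deleteEdges {s(z, w)}).Reachable z v0 := by
        refine ⟨q.toDeleteEdges _ ?_⟩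
        intro e he
        simp only [Set.mem_singleton_iff]
        rintro rfl
        exact hwsup (q.snd_mem_support_of_mem_edges he)
      have hbB : b ∈ edgeSide D.T D.bag z w := mem_edgeSide hreachz hb0
      have hxA : x ∈ edgeSide D.T D.bag w z := bag_subset_edgeSide_s7 w z hx.1
      have hxB : x ∉ edgeSide D.T D.bag z w := by
        intro hxB
        exact hx.2 (hEsub (hIn ▸ (⟨hxA, hxB⟩ :
          x ∈ edgeSide D.T D.bag w z ∩ edgeSide D.T D.bag z w)))
      have haA : a ∈ edgeSide D.T D.bag w z := by
        by_contra haA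
        have haB : a ∈ edgeSide D.T D.bag z w := by
          have : a ∈ edgeSide D.T D.bag w z ∪ edgeSide D.T D.bag z w :=
            (sides_cover D w z).symm ▸ haS
          exact this.resolve_left haA
        exact edge_separator D h hxA hxB haB haA
          ((hax.mono (presGraph_mono hST)).symm)
      have haB : a ∉ edgeSide D.T D.bag z w := by
        intro haB
        exact haT (hEsub (hIn ▸ (⟨haA, haB⟩ :
          a ∈ edgeSide D.T D.bag w z ∩ edgeSide D.T D.bag z w)))
      have hbA : b ∉ edgeSide D.T D.bag w z := by
        intro hbA
        exact hbT (hEsub (hIn ▸ (⟨hbA, hbB⟩ :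
          b ∈ edgeSide D.T D.bag w z ∩ edgeSide D.T D.bag z w)))
      exact ⟨w, z, h, hEsub,
        ⟨haS, fun hE => haT (hEsub hE)⟩, ⟨hbS, fun hE => hbT (hEsub hE)⟩,
        edge_separator D h haA haB hbB hbA⟩

end Aux

/-- part of Theorem 2.5. Fix a reduced visual tree decomposition of a
finite rank Coxeter system `(W,S)` with no bag separated by a complete subset and all
edge sets complete.  Then a subset `T ⊆ S` is an edge set `R_u ∩ R_v` of the
decomposition if and only if `T` is a complete relative minimal separator of `S`. -/
theorem edge_iff_complete_rel_min_separator {W : Type u} [Group W] (S : Set W)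
    (hcox : IsCoxeterGeneratingSet W S) (hfin : S.Finite)
    (D : VisualTreeDecomp W S) (hred : D.Reduced)
    (hbag : ∀ v, ¬ SeparatedByComplete W (D.bag v))
    (hedge : ∀ u v, D.T.Adj u v → IsCompleteSet W (D.bag u ∩ D.bag v))
    (T : Set W) (hT : T ⊆ S) :
    (∃ u v, D.T.Adj u v ∧ D.bag u ∩ D.bag v = T) ↔
      (IsCompleteSet W T ∧ RelMinSeparator W S T) := by
  constructor
  · rintro ⟨u, v, huv, rfl⟩
    refine ⟨hedge u v huv, ?_⟩
    obtain ⟨hsu, hsv⟩ := hred u v huv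
    obtain ⟨a, hau, haE⟩ := Set.exists_of_ssubset hsu
    obtain ⟨b, hbv, hbE⟩ := Set.exists_of_ssubset hsv
    have hIn := D.inter_eq u v huv
    have haA : a ∈ edgeSide D.T D.bag u v := bag_subset_edgeSide_s7 u v hau
    have hbB : b ∈ edgeSide D.T D.bag v u := bag_subset_edgeSide_s7 v u hbv
    have haB : a ∉ edgeSide D.T D.bag v u := by
      intro haB
      exact haE (hIn ▸ (⟨haA, haB⟩ :
        a ∈ edgeSide D.T D.bag u v ∩ edgeSide D.T D.bag v u))
    have hbA : b ∉ edgeSide D.T D.bag u v := by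
      intro hbA
      exact hbE (hIn ▸ (⟨hbA, hbB⟩ :
        b ∈ edgeSide D.T D.bag u v ∩ edgeSide D.T D.bag v u))
    refine ⟨a, b, ⟨⟨D.bag_subset u hau, haE⟩, ⟨D.bag_subset v hbv, hbE⟩,
      edge_separator D huv haA haB hbB hbA⟩, ?_⟩
    intro T' hT' hsep
    obtain ⟨t, htT, htT'⟩ := Set.exists_of_ssubset hT'
    have hT'sub : T' ⊆ D.bag u ∩ D.bag v := hT'.subset
    have hT'c : IsCompleteSet W T' := fun s hs r hr =>
      hedge u v huv s (hT'sub hs) r (hT'sub hr)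
    have h1 := bag_conn (hbag u) hT'c a ⟨hau, fun hh => haE (hT'sub hh)⟩
      t ⟨htT.1, htT'⟩
    have h2 := bag_conn (hbag v) hT'c t ⟨htT.2, htT'⟩
      b ⟨hbv, fun hh => hbE (hT'sub hh)⟩
    have h1' := h1.mono (presGraph_mono (Set.diff_subset_diff_left (D.bag_subset u)))
    have h2' := h2.mono (presGraph_mono (Set.diff_subset_diff_left (D.bag_subset v)))
    exact hsep.2.2 (h1'.trans h2')
  · rintro ⟨hTc, a, b, hab, hmin⟩
    have haS : a ∈ S := hab.1.1
    have hbS : b ∈ S := hab.2.1.1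
    have ha' : a ∈ ⋃ v, D.bag v := D.bags_cover.symm ▸ haS
    have hb' : b ∈ ⋃ v, D.bag v := D.bags_cover.symm ▸ hbS
    obtain ⟨_, ⟨u0, rfl⟩, hau0⟩ := ha'
    obtain ⟨_, ⟨v0, rfl⟩, hbv0⟩ := hb'
    letI : DecidableEq D.V := Classical.decEq _
    obtain ⟨p⟩ := D.isTree.isConnected.preconnected u0 v0
    obtain ⟨u, v, huv, hsub, habsep⟩ := backward_aux D hbag hTc hab u0 v0
      p.bypass p.bypass_isPath hbv0
      ⟨a, ⟨hau0, hab.1.2⟩, SimpleGraph.Reachable.refl a⟩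
    refine ⟨u, v, huv, ?_⟩
    by_contra hne
    exact hmin _ (hsub.ssubset_of_ne hne) habsep
end

section
/- Let (W,S) be a Coxeter system of finite rank, and let (A,C,B) be a separation of S with C complete such that the visual subgroup ⟨C⟩ has index two in ⟨A⟩ and index two in ⟨B⟩. Then there exist a, b ∈ S with A − C = {a} and B − C = {b}, every element of C commutes with a and with b (so that ⟨A⟩ is the internal direct product ⟨a⟩ × ⟨C⟩ and ⟨B⟩ is the internal direct product ⟨b⟩ × ⟨C⟩), the sets A and B are complete, and C is the unique subset of S that separates S. -/
universe u

variable {W : Type u} [Group W]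

open List

namespace DSSAux

open scoped Classical

variable {W : Type u} [Group W] {B : Type*} {M : CoxeterMatrix B} (cs : CoxeterSystem M W)

theorem conj_simple_eq_simple_iff (i : B) (t : W) :
    cs.simple i * t * cs.simple i = cs.simple i ↔ t = cs.simple i := by
  constructor
  · intro h
    have h1 : cs.simple i * (t * cs.simple i) = cs.simple i * 1 := by
      rw [mul_one, ← mul_assoc]; exact h
    have h2 : t * cs.simple i = 1 := mul_left_cancel h1
    have := congrArg (· * cs.simple i) h2
    simpa [mul_assoc, cs.simple_mul_simple_self i] using this
  · rintro rfl
    rw [cs.simple_mul_simple_self i, one_mul]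

/-- The underlying function of the sign permutation. -/
noncomputable def sigmaFun (i : B) : W × ℤˣ → W × ℤˣ :=
  fun p => (cs.simple i * p.1 * cs.simple i, (if p.1 = cs.simple i then -1 else 1) * p.2)

theorem sigmaFun_involutive (i : B) : Function.Involutive (sigmaFun cs i) := by
  rintro ⟨t, ε⟩
  have h2 := cs.simple_mul_simple_self i
  simp only [sigmaFun, Prod.mk.injEq]
  constructor
  · calc cs.simple i * (cs.simple i * t * cs.simple i) * cs.simple i
        = (cs.simple i * cs.simple i) * t * (cs.simple i * cs.simple i) := by group
      _ = t := by rw [h2]; group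
  · by_cases h : t = cs.simple i
    · simp [h, (conj_simple_eq_simple_iff cs i t).mpr h]
    · have hne : cs.simple i * t ≠ 1 :=
        fun hh => h ((eq_inv_of_mul_eq_one_right hh).trans (cs.inv_simple i))
      simp [h, hne]

/-- The sign permutation attached to a simple reflection. -/
noncomputable def sigma (i : B) : Equiv.Perm (W × ℤˣ) := (sigmaFun_involutive cs i).toPerm

theorem sigma_apply (i : B) (t : W) (ε : ℤˣ) :
    sigma cs i (t, ε) =
      (cs.simple i * t * cs.simple i, (if t = cs.simple i then -1 else 1) * ε) := rfl


theorem conj_eq_iff' (u v t : W) : u * t * u⁻¹ = v ↔ t = u⁻¹ * v * u :=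
  ⟨fun h => by rw [← h]; group, fun h => by rw [h]; group⟩

theorem sigma_mul_pow_apply (i j : B) (k : ℕ) (t : W) (ε : ℤˣ) :
    ((sigma cs i * sigma cs j) ^ k) (t, ε) =
      ((cs.simple i * cs.simple j) ^ k * t * ((cs.simple i * cs.simple j) ^ k)⁻¹,
        (∏ l ∈ Finset.range (2 * k),
          (if (cs.simple i * cs.simple j) ^ l * t = cs.simple j then (-1 : ℤˣ) else 1)) * ε) := by
  set p := cs.simple i * cs.simple j with hp
  have hinvp : p⁻¹ = cs.simple j * cs.simple i := by
    rw [hp, mul_inv_rev, cs.inv_simple, cs.inv_simple]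
  have hsj : ∀ a : ℕ, cs.simple j * p ^ a = (p ^ a)⁻¹ * cs.simple j := by
    intro a
    induction a with
    | zero => simp
    | succ n ih =>
      rw [pow_succ', ← mul_assoc]
      have h1 : cs.simple j * p = p⁻¹ * cs.simple j := by
        rw [hinvp, hp, mul_assoc]
      rw [h1, mul_assoc, ih, ← mul_assoc, ← mul_inv_rev, ← pow_succ, pow_succ']
  induction k with
  | zero => simp
  | succ n ih =>
    rw [pow_succ' (sigma cs i * sigma cs j) n, Equiv.Perm.mul_apply, ih,
      Equiv.Perm.mul_apply, sigma_apply, sigma_apply]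
    have e1 : (p ^ n * t * (p ^ n)⁻¹ = cs.simple j) ↔ (p ^ (2 * n) * t = cs.simple j) := by
      rw [conj_eq_iff']
      have h2 : (p ^ n)⁻¹ * cs.simple j * p ^ n = (p ^ (2 * n))⁻¹ * cs.simple j := by
        rw [mul_assoc, hsj n, ← mul_assoc, ← mul_inv_rev, ← pow_add, two_mul]
      rw [h2, eq_inv_mul_iff_mul_eq]
    have hjj := cs.simple_mul_simple_self j
    have cancel : ∀ X : W, cs.simple j * (cs.simple j * X * cs.simple j) * cs.simple j = X := by
      intro X
      calc cs.simple j * (cs.simple j * X * cs.simple j) * cs.simple j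
          = (cs.simple j * cs.simple j) * X * (cs.simple j * cs.simple j) := by group
        _ = X := by rw [hjj]; group
    have e2 : (cs.simple j * (p ^ n * t * (p ^ n)⁻¹) * cs.simple j = cs.simple i) ↔
        (p ^ (2 * n + 1) * t = cs.simple j) := by
      have step1 : (cs.simple j * (p ^ n * t * (p ^ n)⁻¹) * cs.simple j = cs.simple i) ↔
          (p ^ n * t * (p ^ n)⁻¹ = cs.simple j * cs.simple i * cs.simple j) := by
        constructor
        · intro h
          rw [← h]
          exact (cancel _).symm
        · intro h
          rw [h]
          exact cancel _
      rw [step1, conj_eq_iff']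
      have h3 : cs.simple j * cs.simple i * cs.simple j = p⁻¹ * cs.simple j := by
        rw [hinvp]
      have h4 : (p ^ n)⁻¹ * (p⁻¹ * cs.simple j) * p ^ n = (p ^ (2 * n + 1))⁻¹ * cs.simple j := by
        rw [mul_assoc, mul_assoc, hsj n, ← mul_assoc, ← mul_assoc, ← mul_inv_rev, ← mul_inv_rev]
        have h5 : p ^ n * (p * p ^ n) = p ^ (2 * n + 1) := by
          rw [← pow_succ', ← pow_add]
          congr 1
          omega
        rw [h5]
      rw [h3, h4, eq_inv_mul_iff_mul_eq]
    rw [Prod.mk.injEq]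
    constructor
    · calc cs.simple i * (cs.simple j * (p ^ n * t * (p ^ n)⁻¹) * cs.simple j) * cs.simple i
          = (cs.simple i * cs.simple j) * (p ^ n * t * (p ^ n)⁻¹) * (cs.simple j * cs.simple i) := by
            group
        _ = p * (p ^ n * t * (p ^ n)⁻¹) * p⁻¹ := by rw [← hp, ← hinvp]
        _ = p ^ (n + 1) * t * (p ^ (n + 1))⁻¹ := by rw [pow_succ']; group
    · have hone : (if cs.simple j * (p ^ n * t * (p ^ n)⁻¹) * cs.simple j = cs.simple i
          then (-1 : ℤˣ) else 1)
          = (if p ^ (2 * n + 1) * t = cs.simple j then (-1 : ℤˣ) else 1) := if_congr e2 rfl rfl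
      have htwo : (if p ^ n * t * (p ^ n)⁻¹ = cs.simple j then (-1 : ℤˣ) else 1)
          = (if p ^ (2 * n) * t = cs.simple j then (-1 : ℤˣ) else 1) := if_congr e1 rfl rfl
      rw [hone, htwo, show 2 * (n + 1) = (2 * n + 1) + 1 from by omega,
        Finset.prod_range_succ, Finset.prod_range_succ]
      simp [mul_comm, mul_left_comm, mul_assoc]

theorem sigma_liftable : M.IsLiftable (sigma cs (W := W)) := by
  intro i j
  rcases Nat.eq_zero_or_pos (M i j) with h0 | hpos
  · rw [h0, pow_zero]
  · apply Equiv.ext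
    rintro ⟨t, ε⟩
    rw [Equiv.Perm.coe_one, id_eq, sigma_mul_pow_apply]
    have hm : (cs.simple i * cs.simple j) ^ M i j = 1 := cs.simple_mul_simple_pow i j
    have hper : ∀ l : ℕ, (cs.simple i * cs.simple j) ^ (M i j + l)
        = (cs.simple i * cs.simple j) ^ l := by
      intro l
      rw [pow_add, hm, one_mul]
    rw [Prod.mk.injEq]
    constructor
    · rw [hm]; group
    · rw [two_mul, Finset.prod_range_add]
      have : ∀ l ∈ Finset.range (M i j),
          (if (cs.simple i * cs.simple j) ^ (M i j + l) * t = cs.simple j then (-1:ℤˣ) else 1)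
          = (if (cs.simple i * cs.simple j) ^ l * t = cs.simple j then (-1:ℤˣ) else 1) := by
        intro l _
        rw [hper l]
      rw [Finset.prod_congr rfl this, Int.units_mul_self, one_mul]


theorem simple_conj_conj (i : B) (X : W) :
    cs.simple i * (cs.simple i * X * cs.simple i) * cs.simple i = X := by
  have hii := cs.simple_mul_simple_self i
  calc cs.simple i * (cs.simple i * X * cs.simple i) * cs.simple i
      = (cs.simple i * cs.simple i) * X * (cs.simple i * cs.simple i) := by group
    _ = X := by rw [hii]; group

/-- The sign homomorphism. -/
noncomputable def phi : W →* Equiv.Perm (W × ℤˣ) := cs.lift ⟨sigma cs, sigma_liftable cs⟩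

theorem phi_simple (i : B) : phi cs (cs.simple i) = sigma cs i :=
  cs.lift_apply_simple (sigma_liftable cs) i

/-- The sign of `t` relative to the left inversion sequence of `ω`. -/
noncomputable def nu (ω : List B) (t : W) : ℤˣ :=
  ((cs.leftInvSeq ω).map (fun x => if x = t then (-1 : ℤˣ) else 1)).prod

@[simp] theorem nu_nil (t : W) : nu cs [] t = 1 := rfl

theorem leftInvSeq_cons' (i : B) (ω : List B) :
    cs.leftInvSeq (i :: ω)
      = cs.simple i :: (cs.leftInvSeq ω).map (fun x => cs.simple i * x * cs.simple i) := by
  show cs.simple i :: (cs.leftInvSeq ω).map (MulAut.conj (cs.simple i)) = _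
  congr 1
  apply List.map_congr_left
  intro x _
  simp [MulAut.conj_apply, cs.inv_simple]

theorem nu_cons (i : B) (ω : List B) (t : W) :
    nu cs (i :: ω) t = (if cs.simple i = t then (-1 : ℤˣ) else 1)
      * nu cs ω (cs.simple i * t * cs.simple i) := by
  rw [nu, leftInvSeq_cons', List.map_cons, List.prod_cons, List.map_map]
  congr 1
  rw [nu]
  congr 1
  apply List.map_congr_left
  intro x hx
  simp only [Function.comp_apply]
  have hiff : (cs.simple i * x * cs.simple i = t) ↔ (x = cs.simple i * t * cs.simple i) := by
    constructor
    · intro h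
      rw [← h]
      exact (simple_conj_conj cs i x).symm
    · intro h
      rw [h]
      exact simple_conj_conj cs i t
  exact if_congr hiff rfl rfl

theorem phi_wordProd (ω : List B) (t : W) (ε : ℤˣ) :
    phi cs (cs.wordProd ω) (t, ε)
      = (cs.wordProd ω * t * (cs.wordProd ω)⁻¹,
          nu cs ω (cs.wordProd ω * t * (cs.wordProd ω)⁻¹) * ε) := by
  induction ω generalizing t ε with
  | nil => simp [cs.wordProd_nil]
  | cons i ω ih =>
    rw [cs.wordProd_cons, map_mul, Equiv.Perm.mul_apply, ih, phi_simple, sigma_apply]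
    set u := cs.wordProd ω with hu
    have hT : cs.simple i * u * t * (cs.simple i * u)⁻¹
        = cs.simple i * (u * t * u⁻¹) * cs.simple i := by
      rw [mul_inv_rev, cs.inv_simple]
      group
    rw [Prod.mk.injEq]
    constructor
    · exact hT.symm
    · rw [hT, nu_cons, simple_conj_conj]
      have hiff : (cs.simple i = cs.simple i * (u * t * u⁻¹) * cs.simple i)
          ↔ (u * t * u⁻¹ = cs.simple i) := by
        rw [eq_comm, conj_simple_eq_simple_iff]
      rw [if_congr hiff rfl rfl]
      exact (mul_assoc _ _ _).symm

theorem nu_eq_of_wordProd_eq {ω₁ ω₂ : List B} (h : cs.wordProd ω₁ = cs.wordProd ω₂) (t : W) :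
    nu cs ω₁ t = nu cs ω₂ t := by
  set w := cs.wordProd ω₁ with hw
  have h1 := phi_wordProd cs ω₁ (w⁻¹ * t * w) 1
  have h2 := phi_wordProd cs ω₂ (w⁻¹ * t * w) 1
  rw [← h] at h2
  have hc : w * (w⁻¹ * t * w) * w⁻¹ = t := by group
  rw [hc] at h1 h2
  have := h1.symm.trans h2
  have hsnd := congrArg Prod.snd this
  simpa using hsnd


theorem leftInvSeq_append' (α β : List B) :
    cs.leftInvSeq (α ++ β)
      = cs.leftInvSeq α
        ++ (cs.leftInvSeq β).map (fun x => cs.wordProd α * x * (cs.wordProd α)⁻¹) := by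
  induction α with
  | nil => simp
  | cons i α ih =>
    rw [List.cons_append, leftInvSeq_cons', leftInvSeq_cons', ih, List.map_append,
      List.cons_append, List.map_map, cs.wordProd_cons]
    congr 2
    apply List.map_congr_left
    intro x _
    simp only [Function.comp_apply, mul_inv_rev, cs.inv_simple]
    group

theorem nu_append (α β : List B) (t : W) :
    nu cs (α ++ β) t
      = nu cs α t * nu cs β ((cs.wordProd α)⁻¹ * t * cs.wordProd α) := by
  rw [nu, leftInvSeq_append', List.map_append, List.prod_append, List.map_map]
  congr 1
  rw [nu]
  congr 1
  apply List.map_congr_left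
  intro x _
  simp only [Function.comp_apply]
  have hiff : (cs.wordProd α * x * (cs.wordProd α)⁻¹ = t)
      ↔ (x = (cs.wordProd α)⁻¹ * t * cs.wordProd α) := by
    constructor
    · intro h
      rw [← h]
      group
    · intro h
      rw [h]
      group
  exact if_congr hiff rfl rfl

theorem rightInvSeq_eq_map_leftInvSeq (ρ : List B) :
    cs.rightInvSeq ρ
      = (cs.leftInvSeq ρ).map (fun y => (cs.wordProd ρ)⁻¹ * y * cs.wordProd ρ) := by
  induction ρ with
  | nil => simp
  | cons i ρ ih =>
    show ((cs.wordProd ρ)⁻¹ * cs.simple i * cs.wordProd ρ) :: cs.rightInvSeq ρ = _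
    rw [leftInvSeq_cons', List.map_cons, List.map_map, ih]
    congr 1
    · simp [cs.wordProd_cons, mul_inv_rev, cs.inv_simple, mul_assoc,
        cs.simple_mul_simple_cancel_left]
    · apply List.map_congr_left
      intro x _
      simp only [Function.comp_apply, cs.wordProd_cons, mul_inv_rev, cs.inv_simple]
      have hii := cs.simple_mul_simple_self i
      calc (cs.wordProd ρ)⁻¹ * x * cs.wordProd ρ
          = (cs.wordProd ρ)⁻¹ * ((cs.simple i * cs.simple i) * x * (cs.simple i * cs.simple i))
            * cs.wordProd ρ := by rw [hii]; group
        _ = (cs.wordProd ρ)⁻¹ * cs.simple i * (cs.simple i * x * cs.simple i)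
            * (cs.simple i * cs.wordProd ρ) := by group

theorem nu_reverse (ρ : List B) (x : W) :
    nu cs ρ.reverse x = nu cs ρ (cs.wordProd ρ * x * (cs.wordProd ρ)⁻¹) := by
  rw [nu, cs.leftInvSeq_reverse, rightInvSeq_eq_map_leftInvSeq, List.map_reverse,
    List.prod_reverse, List.map_map, nu]
  congr 1
  apply List.map_congr_left
  intro y _
  simp only [Function.comp_apply]
  have hiff : ((cs.wordProd ρ)⁻¹ * y * cs.wordProd ρ = x)
      ↔ (y = cs.wordProd ρ * x * (cs.wordProd ρ)⁻¹) := by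
    constructor
    · intro h
      rw [← h]
      group
    · intro h
      rw [h]
      group
  exact if_congr hiff rfl rfl

theorem nu_palindrome (ρ : List B) (i : B) :
    nu cs (ρ ++ i :: ρ.reverse) (cs.wordProd ρ * cs.simple i * (cs.wordProd ρ)⁻¹) = -1 := by
  set t := cs.wordProd ρ * cs.simple i * (cs.wordProd ρ)⁻¹ with ht
  have h1 : (cs.wordProd ρ)⁻¹ * t * cs.wordProd ρ = cs.simple i := by
    rw [ht]
    group
  have h2 : cs.simple i * cs.simple i * cs.simple i = cs.simple i := by
    rw [cs.simple_mul_simple_self, one_mul]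
  rw [nu_append, h1, nu_cons, h2, nu_reverse, ← ht, if_pos rfl]
  have h3 : nu cs ρ t * (-1 * nu cs ρ t) = -(nu cs ρ t * nu cs ρ t) := by
    rw [neg_one_mul, mul_neg]
  rw [h3, Int.units_mul_self]


/-- Strong exchange, membership form: if `t` is a reflection with `ℓ(t·πω) < ℓ(πω)`, then
`t` occurs in the left inversion sequence of any word `ω`. -/
theorem mem_leftInvSeq_of_isLeftInversion {t : W} (ht : cs.IsReflection t) (ω : List B)
    (hlt : cs.length (t * cs.wordProd ω) < cs.length (cs.wordProd ω)) :
    t ∈ cs.leftInvSeq ω := by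
  obtain ⟨v, i, htvi⟩ := id ht
  obtain ⟨ρ, rfl⟩ := cs.wordProd_surjective v
  obtain ⟨β, hβred, hβ⟩ := cs.exists_reduced_word' (t * cs.wordProd ω)
  have hpal : cs.wordProd (ρ ++ i :: ρ.reverse) = t := by
    rw [cs.wordProd_append, cs.wordProd_cons, cs.wordProd_reverse, htvi]
    group
  have hword : cs.wordProd ((ρ ++ i :: ρ.reverse) ++ β) = cs.wordProd ω := by
    rw [cs.wordProd_append, hpal, ← hβ, ← mul_assoc, ht.mul_self, one_mul]
  have hν : nu cs ω t = -1 := by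
    rw [← nu_eq_of_wordProd_eq cs hword t, nu_append, hpal]
    have h1 : t⁻¹ * t * t = t := by group
    rw [h1]
    have h2 : t ∉ cs.leftInvSeq β := by
      intro hmem
      have := (cs.isLeftInversion_of_mem_leftInvSeq hβred hmem).2
      rw [← hβ, ← mul_assoc, ht.mul_self, one_mul] at this
      omega
    have h3 : nu cs β t = 1 := by
      rw [nu]
      apply List.prod_eq_one
      intro x hx
      obtain ⟨y, hy, rfl⟩ := List.mem_map.mp hx
      rw [if_neg]
      rintro rfl
      exact h2 hy
    rw [h3, mul_one, htvi, nu_palindrome]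
  by_contra hmem
  have : nu cs ω t = 1 := by
    rw [nu]
    apply List.prod_eq_one
    intro x hx
    obtain ⟨y, hy, rfl⟩ := List.mem_map.mp hx
    rw [if_neg]
    rintro rfl
    exact hmem hy
  rw [this] at hν
  exact absurd hν (by decide)

/-- Strong exchange property. -/
theorem strong_exchange {t : W} (ht : cs.IsReflection t) (ω : List B)
    (hlt : cs.length (t * cs.wordProd ω) < cs.length (cs.wordProd ω)) :
    ∃ j < ω.length, t * cs.wordProd ω = cs.wordProd (ω.eraseIdx j) := by
  have hmem := mem_leftInvSeq_of_isLeftInversion cs ht ω hlt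
  obtain ⟨j, hj, hget⟩ := List.mem_iff_getElem.mp hmem
  rw [cs.length_leftInvSeq] at hj
  refine ⟨j, hj, ?_⟩
  rw [← hget, ← List.getD_eq_getElem _ 1 (by rw [cs.length_leftInvSeq]; exact hj)]
  exact cs.getD_leftInvSeq_mul_wordProd ω j

theorem wordProd_take_succ (ω : List B) (j : ℕ) (hj : j < ω.length) :
    cs.wordProd (ω.take (j + 1)) = cs.wordProd (ω.take j) * cs.simple ω[j] := by
  rw [List.take_succ, cs.wordProd_append]
  congr 1
  rw [List.getElem?_eq_getElem hj]
  simp [cs.wordProd_cons]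

/-- Existence of a descent within a non-reduced word. -/
theorem exists_descent (ω : List B) (h : ¬ cs.IsReduced ω) :
    ∃ j < ω.length,
      cs.length (cs.wordProd (ω.take (j + 1))) < cs.length (cs.wordProd (ω.take j)) := by
  by_contra hno
  push_neg at hno
  apply h
  have key : ∀ j ≤ ω.length, cs.length (cs.wordProd (ω.take j)) = j := by
    intro j
    induction j with
    | zero => simp
    | succ n ih =>
      intro hn
      have hnlt : n < ω.length := by omega
      have hih := ih (by omega)
      have := cs.length_mul_simple (cs.wordProd (ω.take n)) ω[n]
      rw [← wordProd_take_succ cs ω n hnlt] at this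
      have hge := hno n hnlt
      omega
  have := key ω.length le_rfl
  rw [List.take_length] at this
  exact this

/-- Any word contains a reduced word for the same element, with letters among its own. -/
theorem exists_reduced_subword :
    ∀ n (ω : List B), ω.length ≤ n →
      ∃ ω' : List B, (∀ i ∈ ω', i ∈ ω) ∧ cs.IsReduced ω' ∧ cs.wordProd ω' = cs.wordProd ω := by
  intro n
  induction n with
  | zero =>
    intro ω hω
    rw [Nat.le_zero, List.length_eq_zero_iff] at hω
    refine ⟨ω, fun i hi => hi, ?_, rfl⟩
    rw [hω]
    unfold CoxeterSystem.IsReduced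
    simp
  | succ n ih =>
    intro ω hω
    by_cases hred : cs.IsReduced ω
    · exact ⟨ω, fun i hi => hi, hred, rfl⟩
    · obtain ⟨j, hj, hdesc⟩ := exists_descent cs ω hred
      set u := cs.wordProd (ω.take j) with hu
      set t : W := u * cs.simple ω[j] * u⁻¹ with htdef
      have ht : cs.IsReflection t := ⟨u, ω[j], rfl⟩
      have htu : t * u = u * cs.simple ω[j] := by rw [htdef]; group
      have hlt : cs.length (t * cs.wordProd (ω.take j)) < cs.length (cs.wordProd (ω.take j)) := by
        rw [← hu, htu, ← wordProd_take_succ cs ω j hj]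
        exact hdesc
      obtain ⟨k, hk, hex⟩ := strong_exchange cs ht (ω.take j) hlt
      have hklt : k < j := by
        rw [List.length_take] at hk
        omega
      -- new shorter word
      set ω₂ : List B := (ω.take j).eraseIdx k ++ ω.drop (j + 1) with hω₂
      have hprod : cs.wordProd ω₂ = cs.wordProd ω := by
        rw [hω₂, cs.wordProd_append, ← hex, ← hu, htu, ← wordProd_take_succ cs ω j hj,
          ← cs.wordProd_append, List.take_append_drop]
      have hlen : ω₂.length < n + 1 := by
        rw [hω₂, List.length_append, List.length_eraseIdx, List.length_take, List.length_drop]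
        rw [List.length_take] at hk
        simp only [if_pos hk]
        omega
      obtain ⟨ω', hsub, hred', hprod'⟩ := ih ω₂ (by omega)
      refine ⟨ω', ?_, hred', by rw [hprod', hprod]⟩
      intro i hi
      have h2 := hsub i hi
      rw [hω₂] at h2
      rcases List.mem_append.mp h2 with h3 | h3
      · exact ((List.eraseIdx_sublist _ k).trans (List.take_sublist j ω)).mem h3
      · exact (List.drop_sublist (j+1) ω).mem h3


theorem mem_closure_iff_word (T : Set B) (w : W) :
    w ∈ Subgroup.closure (cs.simple '' T)
      ↔ ∃ ω : List B, (∀ i ∈ ω, i ∈ T) ∧ cs.wordProd ω = w := by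
  constructor
  · intro hw
    induction hw using Subgroup.closure_induction with
    | mem x hx =>
      obtain ⟨i, hi, rfl⟩ := hx
      exact ⟨[i], by simpa using hi, by simp⟩
    | one => exact ⟨[], by simp, by simp⟩
    | mul x y hx hy ihx ihy =>
      obtain ⟨ω₁, h1, rfl⟩ := ihx
      obtain ⟨ω₂, h2, rfl⟩ := ihy
      refine ⟨ω₁ ++ ω₂, ?_, by rw [cs.wordProd_append]⟩
      intro i hi
      rcases List.mem_append.mp hi with h | h
      · exact h1 i h
      · exact h2 i h
    | inv x hx ihx =>
      obtain ⟨ω, h1, rfl⟩ := ihx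
      exact ⟨ω.reverse, fun i hi => h1 i (List.mem_reverse.mp hi), by
        rw [cs.wordProd_reverse]⟩
  · rintro ⟨ω, hω, rfl⟩
    rw [CoxeterSystem.wordProd]
    apply Subgroup.list_prod_mem
    intro x hx
    obtain ⟨i, hi, rfl⟩ := List.mem_map.mp hx
    exact Subgroup.subset_closure ⟨i, hω i hi, rfl⟩

theorem exists_reduced_word_of_mem_closure (T : Set B) (w : W)
    (hw : w ∈ Subgroup.closure (cs.simple '' T)) :
    ∃ ω : List B, (∀ i ∈ ω, i ∈ T) ∧ cs.IsReduced ω ∧ cs.wordProd ω = w := by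
  obtain ⟨ω, hω, rfl⟩ := (mem_closure_iff_word cs T w).mp hw
  obtain ⟨ω', hsub, hred, hprod⟩ := exists_reduced_subword cs ω.length ω le_rfl
  exact ⟨ω', fun i hi => hω i (hsub i hi), hred, hprod⟩

/-- An element of length one in a standard parabolic subgroup is a simple reflection
indexed by the parabolic generating set. -/
theorem eq_simple_of_mem_closure_of_length_eq_one (T : Set B) (w : W)
    (hw : w ∈ Subgroup.closure (cs.simple '' T)) (hlen : cs.length w = 1) :
    ∃ i ∈ T, w = cs.simple i := by
  obtain ⟨ω, hT, hred, rfl⟩ := exists_reduced_word_of_mem_closure cs T w hw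
  have hl : ω.length = 1 := by
    rw [CoxeterSystem.IsReduced] at hred
    omega
  obtain ⟨i, rfl⟩ := List.length_eq_one_iff.mp hl
  exact ⟨i, hT i (by simp), by simp⟩

theorem mem_closure_of_mem_leftInvSeq (T : Set B) {ω : List B} (hω : ∀ i ∈ ω, i ∈ T)
    {x : W} (hx : x ∈ cs.leftInvSeq ω) :
    x ∈ Subgroup.closure (cs.simple '' T) := by
  obtain ⟨j, hj, rfl⟩ := List.mem_iff_getElem.mp hx
  rw [cs.length_leftInvSeq] at hj
  rw [← List.getD_eq_getElem _ 1 (by rw [cs.length_leftInvSeq]; exact hj),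
    cs.getD_leftInvSeq ω j]
  have h1 : cs.wordProd (ω.take j) ∈ Subgroup.closure (cs.simple '' T) :=
    (mem_closure_iff_word cs T _).mpr ⟨ω.take j,
      fun i hi => hω i ((List.take_sublist j ω).mem hi), rfl⟩
  have h2 : (Option.map cs.simple ω[j]?).getD 1 ∈ Subgroup.closure (cs.simple '' T) := by
    rw [List.getElem?_eq_getElem hj]
    exact Subgroup.subset_closure ⟨ω[j], hω ω[j] (List.getElem_mem hj), rfl⟩
  exact Subgroup.mul_mem _ (Subgroup.mul_mem _ h1 h2) (Subgroup.inv_mem _ h1)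


section Specialized

variable (S : Set W) {M' : CoxeterMatrix S} (cs' : CoxeterSystem M' W)
  (hs : ∀ s : S, cs'.simple s = (s : W))

include hs

theorem image_preimage_simple {C : Set W} (hCS : C ⊆ S) :
    cs'.simple '' {i : S | (i : W) ∈ C} = C := by
  ext x
  constructor
  · rintro ⟨i, hi, rfl⟩
    rw [hs i]
    exact hi
  · intro hx
    exact ⟨⟨x, hCS hx⟩, hx, hs _⟩

theorem length_of_mem (x : W) (hx : x ∈ S) : cs'.length x = 1 := by
  have : x = cs'.simple ⟨x, hx⟩ := (hs ⟨x, hx⟩).symm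
  rw [this, cs'.length_simple]

theorem mul_self_of_mem (x : W) (hx : x ∈ S) : x * x = 1 := by
  have : x = cs'.simple ⟨x, hx⟩ := (hs ⟨x, hx⟩).symm
  rw [this, cs'.simple_mul_simple_self]

theorem isReflection_of_mem (x : W) (hx : x ∈ S) : cs'.IsReflection x := by
  refine ⟨1, ⟨x, hx⟩, ?_⟩
  rw [hs]
  group

theorem not_mem_closure_of_not_mem {C : Set W} (hCS : C ⊆ S) (x : W) (hx : x ∈ S)
    (hxC : x ∉ C) : x ∉ Subgroup.closure C := by
  intro hmem
  rw [← image_preimage_simple S cs' hs hCS] at hmem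
  obtain ⟨i, hiT, hxi⟩ := eq_simple_of_mem_closure_of_length_eq_one cs' _ x hmem
    (length_of_mem S cs' hs x hx)
  rw [hxi, hs i] at hxC
  exact hxC hiT

/-- Core tool: a letter `x ∉ C` cannot shorten an element of `⟨C⟩` from the left. -/
theorem no_descent_of_closure {C : Set W} (hCS : C ⊆ S) (x : W) (hx : x ∈ S) (hxC : x ∉ C)
    {w : W} (hw : w ∈ Subgroup.closure C)
    (hlt : cs'.length (x * w) < cs'.length w) : False := by
  rw [← image_preimage_simple S cs' hs hCS] at hw
  obtain ⟨ω, hωT, hωw⟩ := (mem_closure_iff_word cs' _ w).mp hw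
  subst hωw
  have hmem := mem_leftInvSeq_of_isLeftInversion cs' (isReflection_of_mem S cs' hs x hx) ω hlt
  have hcl := mem_closure_of_mem_leftInvSeq cs' _ hωT hmem
  rw [image_preimage_simple S cs' hs hCS] at hcl
  exact not_mem_closure_of_not_mem S cs' hs hCS x hx hxC hcl

theorem mul_not_mem_closure {C : Set W} (hCS : C ⊆ S) (x y : W) (hx : x ∈ S) (hy : y ∈ S)
    (hxC : x ∉ C) (hyC : y ∉ C) (hxy : x ≠ y) : x * y ∉ Subgroup.closure C := by
  intro hmem
  have hx2 := mul_self_of_mem S cs' hs x hx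
  have hxxy : x * (x * y) = y := by
    rw [← mul_assoc, hx2, one_mul]
  have hl1 : cs'.length (x * (x * y)) = 1 := by
    rw [hxxy]
    exact length_of_mem S cs' hs y hy
  have hne1 : x * y ≠ 1 := by
    intro h1
    apply hxy
    have := congrArg (x * ·) h1
    simp only [mul_one] at this
    rw [← hxxy, this]
  have hpar : cs'.length (x * y) % 2 = 0 := by
    rw [cs'.length_mul_mod_two, length_of_mem S cs' hs x hx, length_of_mem S cs' hs y hy]
  have hle : cs'.length (x * y) ≠ 0 := by
    rw [ne_eq, cs'.length_eq_zero_iff]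
    exact hne1
  have h2 : 2 ≤ cs'.length (x * y) := by omega
  exact no_descent_of_closure S cs' hs hCS x hx hxC hmem (by omega)

theorem commute_of_conj_mem_closure {C : Set W} (hCS : C ⊆ S) (x c : W) (hx : x ∈ S)
    (hc : c ∈ C) (hxC : x ∉ C) (hmem : x * c * x ∈ Subgroup.closure C) : x * c = c * x := by
  by_contra hnc
  have hx2 := mul_self_of_mem S cs' hs x hx
  have hc2 := mul_self_of_mem S cs' hs c (hCS hc)
  have hxc : x ≠ c := fun h => hxC (h ▸ hc)
  -- length of c * x is 2
  have hcx_ne : c * x ≠ 1 := by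
    intro h1
    apply hxc
    have := congrArg (c * ·) h1
    simp only [mul_one] at this
    rw [← this, ← mul_assoc, hc2, one_mul]
  have hcx_par : cs'.length (c * x) % 2 = 0 := by
    rw [cs'.length_mul_mod_two, length_of_mem S cs' hs x hx, length_of_mem S cs' hs c (hCS hc)]
  have hcx_ne0 : cs'.length (c * x) ≠ 0 := by
    rw [ne_eq, cs'.length_eq_zero_iff]
    exact hcx_ne
  have hcx2 : 2 ≤ cs'.length (c * x) := by omega
  -- x * (x * c * x) = c * x
  have hx_xcx : x * (x * c * x) = c * x := by
    rw [show x * (x * c * x) = (x * x) * c * x from by group, hx2, one_mul]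
  -- length of x*c*x is odd and at most 3
  have hxcx_par : cs'.length (x * c * x) % 2 = 1 := by
    have e1 := cs'.length_mul_mod_two (x * c) x
    have e2 := cs'.length_mul_mod_two x c
    rw [length_of_mem S cs' hs x hx] at e1 e2
    rw [length_of_mem S cs' hs c (hCS hc)] at e2
    omega
  have hxcx_le : cs'.length (x * c * x) ≤ 3 := by
    calc cs'.length (x * c * x) ≤ cs'.length (x * c) + cs'.length x := cs'.length_mul_le _ _
      _ ≤ cs'.length x + cs'.length c + cs'.length x := by
          have := cs'.length_mul_le x c
          omega
      _ ≤ 3 := by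
          rw [length_of_mem S cs' hs x hx, length_of_mem S cs' hs c (hCS hc)]
  rcases (by omega : cs'.length (x * c * x) = 1 ∨ cs'.length (x * c * x) = 3) with h1 | h3
  · -- use the word [c, x] for c * x
    set ic : S := ⟨c, hCS hc⟩ with hic
    set ix : S := ⟨x, hx⟩ with hix
    have hword : cs'.wordProd [ic, ix] = c * x := by
      rw [CoxeterSystem.wordProd]
      simp [hs ic, hs ix]
      rfl
    have hlt : cs'.length (x * cs'.wordProd [ic, ix]) < cs'.length (cs'.wordProd [ic, ix]) := by
      rw [hword, ← mul_assoc]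
      calc cs'.length (x * c * x) = 1 := h1
        _ < cs'.length (c * x) := by omega
    have hmem2 := mem_leftInvSeq_of_isLeftInversion cs'
      (isReflection_of_mem S cs' hs x hx) [ic, ix] hlt
    rw [leftInvSeq_cons', CoxeterSystem.leftInvSeq_singleton, List.map_cons, List.map_nil,
      hs ic, hs ix] at hmem2
    simp only [List.mem_cons, List.not_mem_nil, or_false] at hmem2
    rcases hmem2 with h | h
    · exact hxC (h ▸ hc)
    · apply hnc
      have h4 := congrArg (· * c) h
      exact h4.trans (by rw [mul_assoc, hc2, mul_one])
  · apply no_descent_of_closure S cs' hs hCS x hx hxC hmem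
    have hcxle : cs'.length (c * x) ≤ 2 := by
      have := cs'.length_mul_le c x
      rw [length_of_mem S cs' hs x hx, length_of_mem S cs' hs c (hCS hc)] at this
      omega
    rw [hx_xcx, h3]
    omega

end Specialized

end DSSAux


/-- dihedral case of Theorem 3.5. Let `(W,S)` be a Coxeter system of
finite rank and `(A,C,B)` a separation of `S` with `C` complete such that `⟨C⟩` has
index two in `⟨A⟩` and in `⟨B⟩`.  Then `A − C = {a}` and `B − C = {b}` are singletons,
every element of `C` commutes with `a` and with `b` (so `⟨A⟩ = ⟨a⟩ × ⟨C⟩` and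
`⟨B⟩ = ⟨b⟩ × ⟨C⟩`), the sets `A` and `B` are complete, and `C` is the unique subset
of `S` separating `S`. -/
theorem dihedral_splitting_structure {W : Type u} [Group W] (S A C B : Set W)
    (hcox : IsCoxeterGeneratingSet W S) (hfin : S.Finite)
    (hsep : IsSeparation W S A C B) (hC : IsCompleteSet W C)
    (hA : (Subgroup.closure C).relIndex (Subgroup.closure A) = 2)
    (hB : (Subgroup.closure C).relIndex (Subgroup.closure B) = 2) :
    ∃ a b : W, A \ C = {a} ∧ B \ C = {b} ∧
      (∀ c ∈ C, Commute c a) ∧ (∀ c ∈ C, Commute c b) ∧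
      IsCompleteSet W A ∧ IsCompleteSet W B ∧
      (∀ T ⊆ S, (Separates W S T ↔ T = C)) := by
  obtain ⟨M', cs', hsim⟩ := hcox
  obtain ⟨hunion, hinter, ⟨a, haAC⟩, ⟨b, hbBC⟩, hinf⟩ := hsep
  have hAS : A ⊆ S := by rw [← hunion]; exact Set.subset_union_left
  have hBS : B ⊆ S := by rw [← hunion]; exact Set.subset_union_right
  have hCA : C ⊆ A := by rw [← hinter]; exact Set.inter_subset_left
  have hCB : C ⊆ B := by rw [← hinter]; exact Set.inter_subset_right
  have hCS : C ⊆ S := fun x hx => hAS (hCA hx)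
  have haS : a ∈ S := hAS haAC.1
  have hbS : b ∈ S := hBS hbBC.1
  have hmulself : ∀ x ∈ S, x * x = 1 := fun x hx => DSSAux.mul_self_of_mem S cs' hsim x hx
  -- the general order-finiteness helper for commuting involutions
  have horder : ∀ x y : W, x * x = 1 → y * y = 1 → x * y = y * x → orderOf (x * y) ≠ 0 := by
    intro x y hx hy hcomm h0
    have h2 : (x * y) ^ 2 = 1 := by
      rw [pow_two]
      calc x * y * (x * y) = x * (y * x) * y := by group
        _ = x * (x * y) * y := by rw [hcomm]
        _ = (x * x) * (y * y) := by group
        _ = 1 := by rw [hx, hy, one_mul]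
    exact (orderOf_eq_zero_iff.mp h0) (isOfFinOrder_iff_pow_eq_one.mpr ⟨2, by norm_num, h2⟩)
  -- index-two multiplication rules
  have hidx : ∀ (D : Set W), C ⊆ D → (Subgroup.closure C).relIndex (Subgroup.closure D) = 2 →
      ∀ x y : W, x ∈ Subgroup.closure D → y ∈ Subgroup.closure D →
      x ∉ Subgroup.closure C → y ∉ Subgroup.closure C → x * y ∈ Subgroup.closure C := by
    intro D hCD hrel x y hx hy hxC hyC
    have hrel' : ((Subgroup.closure C).subgroupOf (Subgroup.closure D)).index = 2 := hrel
    have hmm := (Subgroup.mul_mem_iff_of_index_two hrel'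
      (a := ⟨x, hx⟩) (b := ⟨y, hy⟩)).mpr
      (iff_of_false (fun h => hxC (Subgroup.mem_subgroupOf.mp h))
        (fun h => hyC (Subgroup.mem_subgroupOf.mp h)))
    exact Subgroup.mem_subgroupOf.mp hmm
  have hnotmem : ∀ x ∈ S, x ∉ C → x ∉ Subgroup.closure C :=
    fun x hx hxC => DSSAux.not_mem_closure_of_not_mem S cs' hsim hCS x hx hxC
  -- singleton lemmas
  have hsingleton : ∀ (D : Set W), C ⊆ D → D ⊆ S →
      (Subgroup.closure C).relIndex (Subgroup.closure D) = 2 →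
      ∀ x ∈ D \ C, ∀ y ∈ D \ C, x = y := by
    intro D hCD hDS hrel x hx y hy
    by_contra hne
    have hxyC : x * y ∈ Subgroup.closure C :=
      hidx D hCD hrel x y (Subgroup.subset_closure hx.1) (Subgroup.subset_closure hy.1)
        (hnotmem x (hDS hx.1) hx.2) (hnotmem y (hDS hy.1) hy.2)
    exact DSSAux.mul_not_mem_closure S cs' hsim hCS x y (hDS hx.1) (hDS hy.1)
      hx.2 hy.2 hne hxyC
  have hsingA : A \ C = {a} := by
    apply Set.eq_singleton_iff_unique_mem.mpr
    exact ⟨haAC, fun x hx => hsingleton A hCA hAS hA x hx a haAC⟩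
  have hsingB : B \ C = {b} := by
    apply Set.eq_singleton_iff_unique_mem.mpr
    exact ⟨hbBC, fun x hx => hsingleton B hCB hBS hB x hx b hbBC⟩
  -- commuting lemmas
  have hcommgen : ∀ (D : Set W), C ⊆ D → D ⊆ S →
      (Subgroup.closure C).relIndex (Subgroup.closure D) = 2 →
      ∀ x ∈ D \ C, ∀ c ∈ C, Commute c x := by
    intro D hCD hDS hrel x hx c hc
    have hxcl : x ∈ Subgroup.closure D := Subgroup.subset_closure hx.1
    have hcxcl : c * x ∈ Subgroup.closure D :=
      Subgroup.mul_mem _ (Subgroup.subset_closure (hCD hc)) hxcl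
    have hxnC : x ∉ Subgroup.closure C := hnotmem x (hDS hx.1) hx.2
    have hcxnC : c * x ∉ Subgroup.closure C := by
      intro hmem
      apply hxnC
      have := Subgroup.mul_mem _ (Subgroup.inv_mem _ (Subgroup.subset_closure hc)) hmem
      rwa [inv_mul_cancel_left] at this
    have hxcx : x * c * x ∈ Subgroup.closure C := by
      have := hidx D hCD hrel x (c * x) hxcl hcxcl hxnC hcxnC
      rwa [← mul_assoc] at this
    have := DSSAux.commute_of_conj_mem_closure S cs' hsim hCS x c (hDS hx.1) hc hx.2 hxcx
    exact this.symm
  have hcommA : ∀ c ∈ C, Commute c a := fun c hc => hcommgen A hCA hAS hA a haAC c hc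
  have hcommB : ∀ c ∈ C, Commute c b := fun c hc => hcommgen B hCB hBS hB b hbBC c hc
  -- membership structure of S
  have hSmem : ∀ x ∈ S, x ∈ C ∨ x = a ∨ x = b := by
    intro x hx
    by_cases hxC : x ∈ C
    · exact Or.inl hxC
    · rcases (hunion ▸ hx : x ∈ A ∪ B) with h | h
      · exact Or.inr (Or.inl (by
          have : x ∈ A \ C := ⟨h, hxC⟩
          rw [hsingA] at this
          exact this))
      · exact Or.inr (Or.inr (by
          have : x ∈ B \ C := ⟨h, hxC⟩
          rw [hsingB] at this
          exact this))
  have hanC : a ∉ C := haAC.2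
  have hbnC : b ∉ C := hbBC.2
  have hab : a ≠ b := by
    intro h
    apply hanC
    rw [← hinter]
    exact ⟨haAC.1, h ▸ hbBC.1⟩
  -- finite orders everywhere except the pair (a, b)
  have hfin_ca : ∀ c ∈ C, orderOf (c * a) ≠ 0 := fun c hc =>
    horder c a (hmulself c (hCS hc)) (hmulself a haS) (hcommA c hc)
  have hfin_ac : ∀ c ∈ C, orderOf (a * c) ≠ 0 := fun c hc =>
    horder a c (hmulself a haS) (hmulself c (hCS hc)) (hcommA c hc).symm
  have hfin_cb : ∀ c ∈ C, orderOf (c * b) ≠ 0 := fun c hc =>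
    horder c b (hmulself c (hCS hc)) (hmulself b hbS) (hcommB c hc)
  have hfin_bc : ∀ c ∈ C, orderOf (b * c) ≠ 0 := fun c hc =>
    horder b c (hmulself b hbS) (hmulself c (hCS hc)) (hcommB c hc).symm
  have hfin_self : ∀ x ∈ S, orderOf (x * x) ≠ 0 := by
    intro x hx
    rw [hmulself x hx, orderOf_one]
    norm_num
  have hinfpair : ∀ x ∈ S, ∀ y ∈ S, orderOf (x * y) = 0 →
      (x = a ∧ y = b) ∨ (x = b ∧ y = a) := by
    intro x hx y hy h0
    rcases hSmem x hx with hxC | hxa | hxb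
    · exfalso
      rcases hSmem y hy with hyC | hya | hyb
      · exact hC x hxC y hyC h0
      · rw [hya] at h0; exact hfin_ca x hxC h0
      · rw [hyb] at h0; exact hfin_cb x hxC h0
    · rcases hSmem y hy with hyC | hya | hyb
      · exfalso; rw [hxa] at h0; exact hfin_ac y hyC h0
      · exfalso; rw [hxa, hya] at h0; exact hfin_self a haS h0
      · exact Or.inl ⟨hxa, hyb⟩
    · rcases hSmem y hy with hyC | hya | hyb
      · exfalso; rw [hxb] at h0; exact hfin_bc y hyC h0
      · exact Or.inr ⟨hxb, hya⟩
      · exfalso; rw [hxb, hyb] at h0; exact hfin_self b hbS h0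
  -- completeness of A and B
  have hcompA : IsCompleteSet W A := by
    intro x hx y hy
    rcases hSmem x (hAS hx) with hxC | hxa | hxb
    · rcases hSmem y (hAS hy) with hyC | hya | hyb
      · exact hC x hxC y hyC
      · rw [hya]; exact hfin_ca x hxC
      · rw [hyb]; exact hfin_cb x hxC
    · rcases hSmem y (hAS hy) with hyC | hya | hyb
      · rw [hxa]; exact hfin_ac y hyC
      · rw [hxa, hya]; exact hfin_self a haS
      · exfalso; rw [hyb] at hy
        exact hbnC (hinter ▸ (⟨hy, hbBC.1⟩ : b ∈ A ∩ B))
    · exfalso; rw [hxb] at hx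
      exact hbnC (hinter ▸ (⟨hx, hbBC.1⟩ : b ∈ A ∩ B))
  have hcompB : IsCompleteSet W B := by
    intro x hx y hy
    rcases hSmem x (hBS hx) with hxC | hxa | hxb
    · rcases hSmem y (hBS hy) with hyC | hya | hyb
      · exact hC x hxC y hyC
      · exfalso; rw [hya] at hy
        exact hanC (hinter ▸ (⟨haAC.1, hy⟩ : a ∈ A ∩ B))
      · rw [hyb]; exact hfin_cb x hxC
    · exfalso; rw [hxa] at hx
      exact hanC (hinter ▸ (⟨haAC.1, hx⟩ : a ∈ A ∩ B))
    · rcases hSmem y (hBS hy) with hyC | hya | hyb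
      · rw [hxb]; exact hfin_bc y hyC
      · exfalso; rw [hya] at hy
        exact hanC (hinter ▸ (⟨haAC.1, hy⟩ : a ∈ A ∩ B))
      · rw [hxb, hyb]; exact hfin_self b hbS
  -- unique separation
  refine ⟨a, b, hsingA, hsingB, hcommA, hcommB, hcompA, hcompB, ?_⟩
  intro T hTS
  constructor
  · -- any separating subset is C
    rintro ⟨x, hx, y, hy, hnreach⟩
    have hxy : x ≠ y := by
      rintro rfl
      exact hnreach (SimpleGraph.Reachable.refl x)
    have h0 : orderOf (x * y) = 0 := by
      by_contra hord
      exact hnreach (SimpleGraph.Adj.reachable ⟨hxy, hx, hy, hord⟩)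
    have hxyab := hinfpair x hx.1 y hy.1 h0
    have haT : a ∉ T := by
      rcases hxyab with ⟨rfl, rfl⟩ | ⟨rfl, rfl⟩
      · exact hx.2
      · exact hy.2
    have hbT : b ∉ T := by
      rcases hxyab with ⟨rfl, rfl⟩ | ⟨rfl, rfl⟩
      · exact hy.2
      · exact hx.2
    have hCT : C ⊆ T := by
      intro c hc
      by_contra hcT
      have hadj1 : (presGraph W (S \ T)).Adj x c := by
        refine ⟨?_, hx, ⟨hCS hc, hcT⟩, ?_⟩
        · rcases hxyab with ⟨rfl, _⟩ | ⟨rfl, _⟩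
          · exact fun h => hanC (h ▸ hc)
          · exact fun h => hbnC (h ▸ hc)
        · rcases hxyab with ⟨rfl, _⟩ | ⟨rfl, _⟩
          · exact hfin_ac c hc
          · exact hfin_bc c hc
      have hadj2 : (presGraph W (S \ T)).Adj c y := by
        refine ⟨?_, ⟨hCS hc, hcT⟩, hy, ?_⟩
        · rcases hxyab with ⟨_, rfl⟩ | ⟨_, rfl⟩
          · exact fun h => hbnC (h ▸ hc)
          · exact fun h => hanC (h ▸ hc)
        · rcases hxyab with ⟨_, rfl⟩ | ⟨_, rfl⟩
          · exact hfin_cb c hc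
          · exact hfin_ca c hc
      exact hnreach (hadj1.reachable.trans hadj2.reachable)
    have hTC : T ⊆ C := by
      intro u hu
      rcases hSmem u (hTS hu) with huC | rfl | rfl
      · exact huC
      · exact absurd hu haT
      · exact absurd hu hbT
    exact Set.Subset.antisymm hTC hCT
  · -- C separates S
    intro hTeq
    rw [hTeq]
    refine ⟨a, ⟨haS, hanC⟩, b, ⟨hbS, hbnC⟩, ?_⟩
    intro hreach
    have walkA : ∀ (x y : W), (presGraph W (S \ C)).Walk x y → x ∈ A \ C → y ∈ A \ C := by
      intro x y p
      induction p with
      | nil => exact id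
      | @cons u v w h p ih =>
        intro hu
        apply ih
        obtain ⟨hne, hus, hvs, hord⟩ := h
        rcases (hunion ▸ hvs.1 : v ∈ A ∪ B) with hvA | hvB
        · exact ⟨hvA, hvs.2⟩
        · exact absurd (hinf u hu v ⟨hvB, hvs.2⟩) hord
    obtain ⟨p⟩ := hreach
    have hbA : b ∈ A \ C := walkA a b p ⟨haAC.1, hanC⟩
    exact hbnC (hinter ▸ (⟨hbA.1, hbBC.1⟩ : b ∈ A ∩ B))
end
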